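/- For every integer n ≥ 0, the following identity of polynomials holds in ℤ[x]: ∑_{j=0}^{n} ((n+j)!/(j!·j!·(n−j)!))·(x−1)^{n−j} = ∑_{j=0}^{n} (C(n,j))²·x^{n−j}, where C(n,j) denotes the binomial coefficient n choose j. -/

import Mathlib

open Polynomial

private lemma fact_div_eq (n j : ℕ) (h : j ≤ n) :
    (n + j).factorial / (j.factorial * j.factorial * (n - j).factorial)
      = (n + j).choose j * n.choose j := by
  have h1 : (n + j).choose j * j.factorial * n.factorial = (n + j).factorial := by
    have := Nat.choose_mul_factorial_mul_factorial (Nat.le_add_left j n)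
    simpa using this
  have h2 := Nat.choose_mul_factorial_mul_factorial h
  apply Nat.div_eq_of_eq_mul_left
  · positivity
  · rw [← h1, ← h2]; ring

private lemma key_sum (n i : ℕ) (hi : i ≤ n) :
    ∑ k ∈ Finset.range (n + 1), n.choose k * n.choose k * k.choose i
      = (n + (n - i)).choose (n - i) * n.choose (n - i) := by
  -- restrict to k ≥ i
  have hsplit : ∑ k ∈ Finset.range (n + 1), n.choose k * n.choose k * k.choose i
      = ∑ k ∈ Finset.Ico i (n + 1), n.choose k * n.choose k * k.choose i := by
    rw [Finset.range_eq_Ico, ← Finset.sum_Ico_consecutive _ (Nat.zero_le i) (by omega)]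
    have : ∑ k ∈ Finset.Ico 0 i, n.choose k * n.choose k * k.choose i = 0 := by
      apply Finset.sum_eq_zero
      intro k hk
      simp only [Finset.mem_Ico] at hk
      rw [Nat.choose_eq_zero_of_lt hk.2, Nat.mul_zero]
    rw [this, Nat.zero_add]
  rw [hsplit, Finset.sum_Ico_eq_sum_range]
  have hrange : n + 1 - i = n - i + 1 := by omega
  rw [hrange]
  have hterm : ∀ p ∈ Finset.range (n - i + 1),
      n.choose (i + p) * n.choose (i + p) * (i + p).choose i
        = n.choose i * ((n - i).choose p * n.choose (n - i - p)) := by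
    intro p hp
    simp only [Finset.mem_range] at hp
    have hip : i + p ≤ n := by omega
    have h1 : n.choose (i + p) * (i + p).choose i
        = n.choose i * (n - i).choose p := by
      have := Nat.choose_mul (n := n) (Nat.le_add_right i p)
      simpa using this
    have h2 : n.choose (i + p) = n.choose (n - i - p) := by
      rw [show n - i - p = n - (i + p) by omega, Nat.choose_symm hip]
    calc n.choose (i + p) * n.choose (i + p) * (i + p).choose i
        = (n.choose (i + p) * (i + p).choose i) * n.choose (i + p) := by ring
      _ = n.choose i * (n - i).choose p * n.choose (n - i - p) := by rw [h1, h2]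
      _ = n.choose i * ((n - i).choose p * n.choose (n - i - p)) := by ring
  rw [Finset.sum_congr rfl hterm, ← Finset.mul_sum]
  have hv : (n - i + n).choose (n - i)
      = ∑ p ∈ Finset.range (n - i + 1), (n - i).choose p * n.choose (n - i - p) := by
    rw [Nat.add_choose_eq, Finset.Nat.sum_antidiagonal_eq_sum_range_succ_mk]
  rw [← hv, Nat.choose_symm hi, Nat.add_comm (n - i) n, Nat.mul_comm]

private lemma expand_pow (k m : ℕ) (h : k ≤ m) :
    ((X + 1 : ℤ[X])) ^ k = ∑ i ∈ Finset.range (m + 1), C ((k.choose i : ℤ)) * X ^ i := by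
  rw [add_pow]
  rw [show (∑ i ∈ Finset.range (m + 1), C ((k.choose i : ℤ)) * X ^ i)
      = ∑ i ∈ Finset.range (k + 1), C ((k.choose i : ℤ)) * X ^ i from
    (Finset.sum_subset (Finset.range_subset_range.2 (by omega)) (by
      intro i _ hni
      simp only [Finset.mem_range, not_lt] at hni
      rw [Nat.choose_eq_zero_of_lt (by omega)]
      simp)).symm]
  apply Finset.sum_congr rfl
  intro i _
  simp only [one_pow, mul_one]
  rw [Polynomial.C_eq_natCast]
  ring

private lemma shifted (n : ℕ) :
    ∑ j ∈ Finset.range (n + 1),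
        C ((((n + j).choose j * n.choose j : ℕ)) : ℤ) * X ^ (n - j)
      = ∑ j ∈ Finset.range (n + 1), C ((n.choose j : ℤ) ^ 2) * (X + 1 : ℤ[X]) ^ (n - j) := by
  -- reflect both sides
  rw [← Finset.sum_range_reflect (fun i =>
    C ((((n + i).choose i * n.choose i : ℕ)) : ℤ) * X ^ (n - i)) (n + 1)]
  rw [← Finset.sum_range_reflect (fun i =>
    C ((n.choose i : ℤ) ^ 2) * (X + 1 : ℤ[X]) ^ (n - i)) (n + 1)]
  simp only [Nat.add_sub_cancel]
  have hL : ∀ i ∈ Finset.range (n + 1),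
      C ((((n + (n - i)).choose (n - i) * n.choose (n - i) : ℕ)) : ℤ) * X ^ (n - (n - i))
        = C ((((n + (n - i)).choose (n - i) * n.choose (n - i) : ℕ)) : ℤ) * X ^ i := by
    intro i hi
    simp only [Finset.mem_range] at hi
    rw [show n - (n - i) = i by omega]
  rw [Finset.sum_congr rfl hL]
  have hR : ∀ i ∈ Finset.range (n + 1),
      C ((n.choose (n - i) : ℤ) ^ 2) * (X + 1 : ℤ[X]) ^ (n - (n - i))
        = ∑ t ∈ Finset.range (n + 1),
            C ((n.choose i : ℤ) ^ 2 * (i.choose t : ℤ)) * X ^ t := by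
    intro i hi
    simp only [Finset.mem_range] at hi
    rw [show n - (n - i) = i by omega, Nat.choose_symm (by omega : i ≤ n),
      expand_pow i n (by omega), Finset.mul_sum]
    apply Finset.sum_congr rfl
    intro t _
    rw [map_mul, mul_assoc]
  rw [Finset.sum_congr rfl hR, Finset.sum_comm]
  apply Finset.sum_congr rfl
  intro t ht
  simp only [Finset.mem_range] at ht
  rw [← Finset.sum_mul]
  congr 1
  rw [← map_sum]
  congr 1
  rw [← key_sum n t (by omega)]
  push_cast
  apply Finset.sum_congr rfl
  intro k _
  ring

theorem stmt_3 (n : ℕ) :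
    ∑ j ∈ Finset.range (n + 1),
        (C ((((n + j).factorial / (j.factorial * j.factorial * (n - j).factorial) : ℕ) : ℤ)) *
          (X - 1) ^ (n - j)) =
      ∑ j ∈ Finset.range (n + 1), C ((n.choose j : ℤ) ^ 2) * X ^ (n - j) := by
  have hc : ∀ j ∈ Finset.range (n + 1),
      C ((((n + j).factorial / (j.factorial * j.factorial * (n - j).factorial) : ℕ) : ℤ)) *
          (X - 1 : ℤ[X]) ^ (n - j)
        = C ((((n + j).choose j * n.choose j : ℕ)) : ℤ) * (X - 1 : ℤ[X]) ^ (n - j) := by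
    intro j hj
    simp only [Finset.mem_range] at hj
    rw [fact_div_eq n j (by omega)]
  rw [Finset.sum_congr rfl hc]
  have h := congrArg (aeval (X - 1 : ℤ[X])) (shifted n)
  simp only [map_sum, map_mul, map_pow, aeval_C, aeval_X, map_add, map_one,
    algebraMap_int_eq, eq_intCast, sub_add_cancel] at h
  simpa [Polynomial.C_eq_intCast] using h
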